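/- For k ≥ 1, the generating function over k-winnable permutations (for the second-maximum strategy) satisfies the closed form W₂(N,k) = θ·T₂(N,k) − θ^{2N−2k+1}·(P_{N−2})!·P_k·P_{k−1} = θ·(P_k)!·[ ∏_{j=k−1}^{N−2} (1+θ²P_j) − θ^{2N−2k}·∏_{j=k−1}^{N−2} P_j ]. -/

import Mathlib

open Finset
open scoped Classical

/-- Number of inversions of a permutation of `Fin N`. -/
def invCount {N : ℕ} (π : Equiv.Perm (Fin N)) : ℕ :=
  (Finset.univ.filter (fun p : Fin N × Fin N => p.1 < p.2 ∧ π p.2 < π p.1)).card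

/-- `P_j(θ) = 1 + θ + ⋯ + θ^{j-1}`. -/
def Ppoly (θ : ℝ) (j : ℕ) : ℝ := ∑ i ∈ Finset.range j, θ ^ i

/-- `(P_m)! = P_m ⋯ P_1`. -/
def Pfact (θ : ℝ) (m : ℕ) : ℝ := ∏ j ∈ Finset.Icc 1 m, Ppoly θ j

/-- Position `i` of `π` is a left-to-right second maximum. -/
def isSecondMax {N : ℕ} (π : Equiv.Perm (Fin N)) (i : Fin N) : Prop :=
  (Finset.univ.filter (fun l : Fin N => l ≤ i ∧ π i < π l)).card = 1

/-- `π` is non-`k`-pickable for the second-maximum strategy. -/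
def nonPickable2 {N : ℕ} (k : ℕ) (π : Equiv.Perm (Fin N)) : Prop :=
  ∀ i : Fin N, k ≤ (i : ℕ) → ¬ isSecondMax π i

/-- `π ∈ S_N` is `k`-winnable for the second-maximum strategy. -/
def kWinnable2 {N : ℕ} (k : ℕ) (π : Equiv.Perm (Fin N)) : Prop :=
  ∃ i : Fin N, k ≤ (i : ℕ) ∧ isSecondMax π i ∧
    (∀ j : Fin N, k ≤ (j : ℕ) → isSecondMax π j → i ≤ j) ∧ ((π i : Fin N) : ℕ) = N - 2

/-- `T₂(N,k) = ∑ θ^{inv π}` over non-`k`-pickable `π ∈ S_N`. -/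
noncomputable def T2 (θ : ℝ) (N k : ℕ) : ℝ :=
  ∑ π ∈ Finset.univ.filter (fun π : Equiv.Perm (Fin N) => nonPickable2 k π), θ ^ invCount π

/-- `W₂(N,k) = ∑ θ^{inv π}` over `k`-winnable `π ∈ S_N`. -/
noncomputable def W2 (θ : ℝ) (N k : ℕ) : ℝ :=
  ∑ π ∈ Finset.univ.filter (fun π : Equiv.Perm (Fin N) => kWinnable2 k π), θ ^ invCount π

variable {N : ℕ}

/-- Lehmer-type code: number of earlier (or equal) positions with larger value. -/
def code (π : Equiv.Perm (Fin N)) (i : Fin N) : ℕ :=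
  (Finset.univ.filter (fun l : Fin N => l ≤ i ∧ π i < π l)).card

lemma code_le (π : Equiv.Perm (Fin N)) (i : Fin N) : code π i ≤ (i : ℕ) := by
  classical
  have h1 : (Finset.univ.filter (fun l : Fin N => l ≤ i ∧ π i < π l)) ⊆ Finset.Iio i := by
    intro l hl
    simp only [mem_filter, mem_univ, true_and] at hl
    rcases hl with ⟨hle, hlt⟩
    rcases lt_or_eq_of_le hle with h | h
    · simpa using h
    · subst h; exact absurd hlt (lt_irrefl _)
  calc code π i ≤ (Finset.Iio i).card := Finset.card_le_card h1
    _ = (i : ℕ) := by simp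

lemma invCount_eq_sum_code (π : Equiv.Perm (Fin N)) :
    invCount π = ∑ i : Fin N, code π i := by
  classical
  rw [invCount, Finset.card_eq_sum_card_fiberwise
    (f := fun p : Fin N × Fin N => p.2) (t := Finset.univ) (fun x _ => mem_univ _)]
  refine Finset.sum_congr rfl fun i _ => ?_
  rw [code]
  refine Finset.card_bij (fun p _ => p.1) ?_ ?_ ?_
  · intro p hp
    simp only [mem_filter, mem_univ, true_and] at hp ⊢
    obtain ⟨⟨h1, h2⟩, h3⟩ := hp
    subst h3
    exact ⟨le_of_lt h1, h2⟩
  · intro p hp q hq h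
    simp only [mem_filter, mem_univ, true_and] at hp hq
    exact Prod.ext h (hp.2.trans hq.2.symm)
  · intro l hl
    simp only [mem_filter, mem_univ, true_and] at hl
    refine ⟨(l, i), ?_, rfl⟩
    simp only [mem_filter, mem_univ, true_and]
    have : l ≠ i := by rintro rfl; exact absurd hl.2 (lt_irrefl _)
    exact ⟨⟨lt_of_le_of_ne hl.1 this, hl.2⟩, trivial⟩

/-- The code map into the product of `Fin (i+1)`. -/
def toCode (π : Equiv.Perm (Fin N)) : ∀ i : Fin N, Fin ((i : ℕ) + 1) :=
  fun i => ⟨code π i, Nat.lt_succ_of_le (code_le π i)⟩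

lemma code_eq_card_image (π : Equiv.Perm (Fin N)) (i : Fin N) :
    code π i = (((Finset.Iic i).image π).filter (fun v => π i < v)).card := by
  classical
  rw [code]
  have h1 : Finset.univ.filter (fun l : Fin N => l ≤ i ∧ π i < π l)
      = (Finset.Iic i).filter (fun l => π i < π l) := by
    ext l; simp [and_comm]
  rw [h1, Finset.filter_image, Finset.card_image_of_injective _ π.injective]

lemma toCode_injective : Function.Injective (toCode (N := N)) := by
  classical
  intro π σ h
  have hcode : ∀ i, code π i = code σ i := fun i =>
    congrArg Fin.val (congrFun h i)
  by_contra hne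
  have hD : (Finset.univ.filter (fun j : Fin N => π j ≠ σ j)).Nonempty := by
    rw [Finset.filter_nonempty_iff]
    by_contra h'
    push_neg at h'
    exact hne (Equiv.ext fun j => h' j (mem_univ j))
  set D := Finset.univ.filter (fun j : Fin N => π j ≠ σ j)
  set i := D.max' hD with hi
  have hiD : π i ≠ σ i := by
    have := D.max'_mem hD
    simpa [D] using this
  have htail : ∀ j, i < j → π j = σ j := by
    intro j hj
    by_contra h'
    exact absurd (D.le_max' j (by simpa [D] using h')) (not_le.mpr hj)
  -- the available sets agree
  have himg : (Finset.Iic i).image π = (Finset.Iic i).image σ := by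
    have hIoi : (Finset.Ioi i).image π = (Finset.Ioi i).image σ :=
      Finset.image_congr (fun j hj => htail j (by simpa using hj))
    have hpart : ∀ (τ : Equiv.Perm (Fin N)),
        (Finset.Iic i).image τ = Finset.univ \ (Finset.Ioi i).image τ := by
      intro τ
      ext v
      simp only [Finset.mem_image, Finset.mem_sdiff, mem_univ, true_and,
        Finset.mem_Iic, Finset.mem_Ioi]
      constructor
      · rintro ⟨l, hl, rfl⟩ ⟨m, hm, hml⟩
        exact absurd (τ.injective hml) (by rintro rfl; exact absurd hl (not_le.mpr hm))
      · intro hv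
        obtain ⟨l, rfl⟩ := τ.surjective v
        refine ⟨l, ?_, rfl⟩
        by_contra h'
        exact hv ⟨l, not_le.mp h', rfl⟩
    rw [hpart π, hpart σ, hIoi]
  have hmemπ : π i ∈ (Finset.Iic i).image π :=
    Finset.mem_image_of_mem π (by simp)
  have hmemσ : σ i ∈ (Finset.Iic i).image π := by
    rw [himg]; exact Finset.mem_image_of_mem σ (by simp)
  -- counting argument
  set A := (Finset.Iic i).image π
  have hcnt : (A.filter (fun v => π i < v)).card = (A.filter (fun v => σ i < v)).card := by
    have h1 := code_eq_card_image π i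
    have h2 := code_eq_card_image σ i
    rw [← h1, ← himg] at *
    rw [hcode i, h2, himg]
  have key : ∀ x y : Fin N, x ∈ A → y ∈ A → x < y →
      (A.filter (fun v => y < v)).card < (A.filter (fun v => x < v)).card := by
    intro x y hx hy hxy
    apply Finset.card_lt_card
    constructor
    · intro v hv
      simp only [Finset.mem_filter] at hv ⊢
      exact ⟨hv.1, hxy.trans hv.2⟩
    · intro hsub
      have : y ∈ A.filter (fun v => x < v) := by simp [Finset.mem_filter, hy, hxy]
      have := hsub this
      simp at this
    
  rcases lt_trichotomy (π i) (σ i) with h' | h' | h'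
  · exact absurd hcnt (ne_of_gt (key _ _ hmemπ hmemσ h'))
  · exact hiD h'
  · exact absurd hcnt (ne_of_lt (key _ _ hmemσ hmemπ h'))

lemma toCode_bijective : Function.Bijective (toCode (N := N)) := by
  rw [Fintype.bijective_iff_injective_and_card]
  refine ⟨toCode_injective, ?_⟩
  rw [Fintype.card_perm, Fintype.card_pi, Fintype.card_fin]
  simp only [Fintype.card_fin]
  rw [Fin.prod_univ_eq_prod_range (fun i => i + 1) N]
  exact (Finset.prod_range_add_one_eq_factorial N).symm

/-- The Lehmer code equivalence. -/
noncomputable def codeEquiv : Equiv.Perm (Fin N) ≃ (∀ i : Fin N, Fin ((i : ℕ) + 1)) :=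
  Equiv.ofBijective _ toCode_bijective
section S2
variable {N : ℕ}

lemma coe_codeEquiv (π : Equiv.Perm (Fin N)) (i : Fin N) :
    ((codeEquiv π i : Fin ((i : ℕ) + 1)) : ℕ) = code π i := rfl

lemma master (θ : ℝ) (cond : ∀ _ : Fin N, ℕ → Prop) [∀ i, DecidablePred (cond i)] :
    ∑ π ∈ Finset.univ.filter (fun π : Equiv.Perm (Fin N) => ∀ i, cond i (code π i)),
      θ ^ invCount π
    = ∏ i : Fin N, ∑ v ∈ (Finset.range ((i : ℕ) + 1)).filter (cond i), θ ^ v := by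
  classical
  have hstep : ∀ π : Equiv.Perm (Fin N), θ ^ invCount π = ∏ i : Fin N, θ ^ code π i := by
    intro π; rw [invCount_eq_sum_code, Finset.prod_pow_eq_pow_sum]
  rw [Finset.sum_congr rfl (fun π _ => hstep π)]
  rw [Finset.sum_equiv (codeEquiv (N := N))
      (t := Finset.univ.filter
        (fun f : ∀ i : Fin N, Fin ((i : ℕ) + 1) => ∀ i, cond i (f i)))
      (g := fun f => ∏ i : Fin N, θ ^ ((f i : ℕ)))
      (fun π => by simp [coe_codeEquiv])
      (fun π _ => by simp [coe_codeEquiv])]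
  have hpi : Finset.univ.filter
        (fun f : ∀ i : Fin N, Fin ((i : ℕ) + 1) => ∀ i, cond i (f i))
      = Fintype.piFinset
          (fun i : Fin N => Finset.univ.filter (fun v : Fin ((i : ℕ) + 1) => cond i (v : ℕ))) := by
    ext f; simp [Fintype.mem_piFinset]
  rw [hpi,
    ← Finset.prod_univ_sum
      (fun i : Fin N => Finset.univ.filter (fun v : Fin ((i : ℕ) + 1) => cond i (v : ℕ)))
      (fun i v => θ ^ (v : ℕ))]
  refine Finset.prod_congr rfl fun i _ => ?_
  rw [Finset.sum_filter, Finset.sum_filter,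
    ← Fin.sum_univ_eq_sum_range (fun v => if cond i v then θ ^ v else 0) ((i : ℕ) + 1)]

end S2
section S3
variable {N : ℕ}

lemma isSecondMax_iff_code (π : Equiv.Perm (Fin N)) (i : Fin N) :
    isSecondMax π i ↔ code π i = 1 := Iff.rfl

lemma mem_code_filter (π : Equiv.Perm (Fin N)) (i l : Fin N) :
    l ∈ Finset.univ.filter (fun l : Fin N => l ≤ i ∧ π i < π l) ↔ l ≤ i ∧ π i < π l := by
  simp

lemma exists_of_code_one {π : Equiv.Perm (Fin N)} {q : Fin N} (h : code π q = 1) :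
    ∃ p, p ≤ q ∧ π q < π p := by
  have : (Finset.univ.filter (fun l : Fin N => l ≤ q ∧ π q < π l)).Nonempty := by
    rw [← Finset.card_pos, code] at *; omega
  obtain ⟨p, hp⟩ := this
  rw [mem_code_filter] at hp
  exact ⟨p, hp.1, hp.2⟩

lemma two_le_code {π : Equiv.Perm (Fin N)} {l : Fin N} {a b : Fin N}
    (ha : a ≤ l ∧ π l < π a) (hb : b ≤ l ∧ π l < π b) (hne : a ≠ b) :
    2 ≤ code π l := by
  rw [code]
  rw [show (2 : ℕ) = 1 + 1 by rfl, Nat.add_one_le_iff]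
  exact Finset.one_lt_card.mpr
    ⟨a, (mem_code_filter π l a).mpr ha, b, (mem_code_filter π l b).mpr hb, hne⟩

lemma kWinnable_iff_code (k : ℕ) (hN2 : 2 ≤ N) (π : Equiv.Perm (Fin N)) :
    kWinnable2 k π ↔ ∃ q : Fin N, k ≤ (q : ℕ) ∧
      (∀ i : Fin N, k ≤ (i : ℕ) → i < q → code π i ≠ 1) ∧ code π q = 1 ∧
      (∀ l : Fin N, q < l → 2 ≤ code π l) := by
  classical
  set vmax : Fin N := ⟨N - 1, by omega⟩ with hvmax
  set vsec : Fin N := ⟨N - 2, by omega⟩ with hvsec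
  have hmaxsec : vsec < vmax := by
    simp only [hvmax, hvsec, Fin.lt_def]; omega
  have Fmax : ∀ x : Fin N, x ≤ vmax := by
    intro x; simp only [hvmax, Fin.le_def]; omega
  have Fsec : ∀ x : Fin N, x ≠ vmax → x ≠ vsec → x < vsec := by
    intro x h1 h2
    have h1' : (x : ℕ) ≠ N - 1 := fun h => h1 (Fin.ext h)
    have h2' : (x : ℕ) ≠ N - 2 := fun h => h2 (Fin.ext h)
    have := x.isLt
    simp only [hvsec, Fin.lt_def]; omega
  constructor
  · rintro ⟨i, hki, hsm, hmin, hval⟩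
    rw [isSecondMax_iff_code] at hsm
    have hπi : π i = vsec := Fin.ext hval
    refine ⟨i, hki, ?_, hsm, ?_⟩
    · intro j hkj hji hcode
      exact absurd (hmin j hkj ((isSecondMax_iff_code π j).mpr hcode)) (not_le.mpr hji)
    · intro l hl
      obtain ⟨p, hpq, hlt⟩ := exists_of_code_one hsm
      have hpne : p ≠ i := fun h => by subst h; exact absurd hlt (lt_irrefl _)
      have hπp : π p = vmax := by
        refine Fin.ext ?_
        have h1 : (π i : ℕ) < (π p : ℕ) := hlt
        have h2 := (π p).isLt
        rw [hval] at h1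
        simp only [hvmax]; omega
      have hlπ1 : π l ≠ π p := fun h => by
        have := π.injective h
        subst this
        exact absurd (lt_of_le_of_lt hpq hl) (lt_irrefl _)
      have hlπ2 : π l ≠ π i := fun h => by
        have := π.injective h
        subst this
        exact absurd hl (lt_irrefl _)
      have hllt : π l < vsec := Fsec _ (hπp ▸ hlπ1) (hπi ▸ hlπ2)
      refine two_le_code (a := p) (b := i) ⟨le_of_lt (lt_of_le_of_lt hpq hl), ?_⟩
        ⟨le_of_lt hl, ?_⟩ ?_
      · rw [hπp]; exact lt_of_lt_of_le hllt (le_of_lt hmaxsec)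
      · rw [hπi]; exact hllt
      · intro h; subst h; exact absurd hlt (lt_irrefl _)
  · rintro ⟨q, hkq, hpre, hq1, hpost⟩
    obtain ⟨p, hpq, hlt⟩ := exists_of_code_one hq1
    have hπqmax : π q ≠ vmax := by
      intro h
      exact absurd (lt_of_lt_of_le hlt (Fmax (π p))) (h ▸ lt_irrefl _)
    have key : π q = vsec := by
      by_contra hne
      set la := π.symm vmax with hla
      set lb := π.symm vsec with hlb
      have hπla : π la = vmax := π.apply_symm_apply vmax
      have hπlb : π lb = vsec := π.apply_symm_apply vsec
      have hlaq : la < q := by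
        have h1 : la ≤ q := by
          by_contra h
          have h2 := hpost la (not_le.mp h)
          have h3 : code π la = 0 := by
            rw [code, Finset.card_eq_zero, Finset.filter_eq_empty_iff]
            intro m _
            rw [hπla]
            exact fun hc => absurd hc.2 (not_lt.mpr (Fmax (π m)))
          omega
        refine lt_of_le_of_ne h1 (fun h => ?_)
        subst h
        exact hπqmax hπla
      have hlbq : lb < q := by
        have h1 : lb ≤ q := by
          by_contra h
          have h2 := hpost lb (not_le.mp h)
          have h3 : code π lb ≤ 1 := by
            rw [code]
            calc (Finset.univ.filter (fun m : Fin N => m ≤ lb ∧ π lb < π m)).card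
                ≤ ({la} : Finset (Fin N)).card := by
                  apply Finset.card_le_card
                  intro m hm
                  rw [mem_code_filter] at hm
                  rw [Finset.mem_singleton]
                  have : π m = vmax := by
                    refine Fin.ext ?_
                    have h4 : (vsec : ℕ) < (π m : ℕ) := hπlb ▸ hm.2
                    have h5 := (π m).isLt
                    simp only [hvsec] at h4
                    simp only [hvmax]; omega
                  have := congrArg π.symm this
                  simpa [hla] using this
              _ = 1 := Finset.card_singleton _
          omega
        refine lt_of_le_of_ne h1 (fun h => ?_)
        subst h
        exact hne hπlb
      have hlalb : la ≠ lb := by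
        intro h
        rw [hla, hlb] at h
        have := π.symm.injective h
        exact absurd this (ne_of_gt hmaxsec)
      have hπqsec : π q < vsec := Fsec _ hπqmax hne
      have : 2 ≤ code π q := by
        refine two_le_code (a := la) (b := lb) ⟨le_of_lt hlaq, ?_⟩ ⟨le_of_lt hlbq, ?_⟩ hlalb
        · rw [hπla]; exact lt_of_lt_of_le hπqsec (le_of_lt hmaxsec)
        · rw [hπlb]; exact hπqsec
      omega
    refine ⟨q, hkq, (isSecondMax_iff_code π q).mpr hq1, ?_, ?_⟩
    · intro j hkj hsmj
      rw [isSecondMax_iff_code] at hsmj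
      rcases lt_trichotomy j q with h | h | h
      · exact absurd hsmj (hpre j hkj h)
      · exact h.ge
      · have := hpost j h; omega
    · rw [key]
end S3
section S4

lemma sum_Ico_two (θ : ℝ) (n : ℕ) :
    ∑ v ∈ Finset.Ico 2 (n + 2), θ ^ v = θ ^ 2 * Ppoly θ n := by
  rw [Finset.sum_Ico_eq_sum_range]
  have h : n + 2 - 2 = n := by omega
  rw [h, Ppoly, Finset.mul_sum]
  exact Finset.sum_congr rfl fun i _ => by rw [pow_add]

lemma sumB (θ : ℝ) {n : ℕ} (hn : 1 ≤ n) :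
    ∑ v ∈ (Finset.range (n + 1)).filter (· ≠ 1), θ ^ v = 1 + θ ^ 2 * Ppoly θ (n - 1) := by
  obtain ⟨m, rfl⟩ : ∃ m, n = m + 1 := ⟨n - 1, by omega⟩
  have h : (Finset.range (m + 1 + 1)).filter (· ≠ 1) = insert 0 (Finset.Ico 2 (m + 2)) := by
    ext v
    simp only [Finset.mem_filter, Finset.mem_range, Finset.mem_insert, Finset.mem_Ico]
    omega
  rw [h, Finset.sum_insert (by simp), sum_Ico_two]
  have h2 : m + 1 - 1 = m := by omega
  rw [h2, pow_zero]

lemma sumC (θ : ℝ) {n : ℕ} (hn : 1 ≤ n) :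
    ∑ v ∈ (Finset.range (n + 1)).filter (· = 1), θ ^ v = θ := by
  have h : (Finset.range (n + 1)).filter (· = 1) = {1} := by
    ext v
    simp only [Finset.mem_filter, Finset.mem_range, Finset.mem_singleton]
    omega
  rw [h, Finset.sum_singleton, pow_one]

lemma sumD (θ : ℝ) {n : ℕ} (hn : 1 ≤ n) :
    ∑ v ∈ (Finset.range (n + 1)).filter (2 ≤ ·), θ ^ v = θ ^ 2 * Ppoly θ (n - 1) := by
  obtain ⟨m, rfl⟩ : ∃ m, n = m + 1 := ⟨n - 1, by omega⟩
  have h : (Finset.range (m + 1 + 1)).filter (2 ≤ ·) = Finset.Ico 2 (m + 2) := by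
    ext v
    simp only [Finset.mem_filter, Finset.mem_range, Finset.mem_Ico]
    omega
  rw [h, sum_Ico_two]
  congr 1

lemma Pfact_eq_prod_range (θ : ℝ) (k : ℕ) :
    Pfact θ k = ∏ n ∈ Finset.range k, Ppoly θ (n + 1) := by
  rw [Pfact, show Finset.Icc 1 k = Finset.Ico 1 (k + 1) from (Finset.Ico_add_one_right_eq_Icc 1 k).symm,
    Finset.prod_Ico_eq_prod_range]
  have h : k + 1 - 1 = k := by omega
  rw [h]
  exact Finset.prod_congr rfl fun i _ => by rw [Nat.add_comm]

lemma prod_shift (g : ℕ → ℝ) {a b : ℕ} (ha : 1 ≤ a) (hab : a ≤ b) :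
    ∏ n ∈ Finset.Ico a b, g (n - 1) = ∏ j ∈ Finset.Ico (a - 1) (b - 1), g j := by
  rw [Finset.prod_Ico_eq_prod_range, Finset.prod_Ico_eq_prod_range]
  have h : b - 1 - (a - 1) = b - a := by omega
  rw [h]
  exact Finset.prod_congr rfl fun i _ => by congr 1; omega

lemma telescope (A B : ℕ → ℝ) (hAB : ∀ j, A j = 1 + B j) (a : ℕ) (m : ℕ) :
    ∑ r ∈ Finset.range m,
      (∏ j ∈ Finset.Ico a (a + r), A j) * (∏ j ∈ Finset.Ico (a + r + 1) (a + m), B j)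
    = ∏ j ∈ Finset.Ico a (a + m), A j - ∏ j ∈ Finset.Ico a (a + m), B j := by
  induction m with
  | zero => simp
  | succ m ih =>
    rw [Finset.sum_range_succ]
    have hterm : ∀ r ∈ Finset.range m,
        (∏ j ∈ Finset.Ico a (a + r), A j) * (∏ j ∈ Finset.Ico (a + r + 1) (a + (m + 1)), B j)
        = ((∏ j ∈ Finset.Ico a (a + r), A j) *
            (∏ j ∈ Finset.Ico (a + r + 1) (a + m), B j)) * B (a + m) := by
      intro r hr
      rw [Finset.mem_range] at hr
      rw [show a + (m + 1) = (a + m) + 1 by ring,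
        Finset.prod_Ico_succ_top (by omega : a + r + 1 ≤ a + m)]
      ring
    rw [Finset.sum_congr rfl hterm, ← Finset.sum_mul, ih]
    rw [show a + (m + 1) = (a + m) + 1 by ring]
    rw [show Finset.Ico ((a + m) + 1) ((a + m) + 1) = ∅ from Finset.Ico_self _,
      Finset.prod_empty,
      Finset.prod_Ico_succ_top (by omega : a ≤ a + m),
      Finset.prod_Ico_succ_top (by omega : a ≤ a + m),
      hAB (a + m)]
    ring

end S4
section S5
open scoped Classical

lemma T2_eval (θ : ℝ) {N k : ℕ} (hk : 1 ≤ k) (hN : k + 1 ≤ N) :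
    T2 θ N k = Pfact θ k * ∏ j ∈ Finset.Icc (k - 1) (N - 2), (1 + θ ^ 2 * Ppoly θ j) := by
  classical
  have hfil : Finset.univ.filter (fun π : Equiv.Perm (Fin N) => nonPickable2 k π)
      = Finset.univ.filter
          (fun π : Equiv.Perm (Fin N) => ∀ i : Fin N, k ≤ (i : ℕ) → code π i ≠ 1) := by
    apply Finset.filter_congr
    intro π _
    constructor
    · intro h i hki; exact h i hki
    · intro h i hki; exact h i hki
  rw [T2, hfil, master θ (fun i : Fin N => fun v => k ≤ (i : ℕ) → v ≠ 1)]
  rw [Fin.prod_univ_eq_prod_range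
    (fun n => ∑ v ∈ (Finset.range (n + 1)).filter (fun v => k ≤ n → v ≠ 1), θ ^ v) N]
  rw [← Finset.prod_range_mul_prod_Ico _ (show k ≤ N by omega)]
  congr 1
  · -- prefix  ∏_{n<k}
    rw [Pfact_eq_prod_range]
    refine Finset.prod_congr rfl fun n hn => ?_
    rw [Finset.mem_range] at hn
    rw [Finset.filter_true_of_mem (fun v _ => fun hkn => absurd hkn (by omega))]
    rfl
  · -- suffix
    have h1 : ∀ n ∈ Finset.Ico k N,
        (∑ v ∈ (Finset.range (n + 1)).filter (fun v => k ≤ n → v ≠ 1), θ ^ v)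
        = 1 + θ ^ 2 * Ppoly θ (n - 1) := by
      intro n hn
      rw [Finset.mem_Ico] at hn
      have : (Finset.range (n + 1)).filter (fun v => k ≤ n → v ≠ 1)
          = (Finset.range (n + 1)).filter (· ≠ 1) :=
        Finset.filter_congr (fun v _ => by simp [hn.1])
      rw [this, sumB θ (by omega : 1 ≤ n)]
    rw [Finset.prod_congr rfl h1,
      prod_shift (fun j => 1 + θ ^ 2 * Ppoly θ j) (by omega : 1 ≤ k) (by omega : k ≤ N)]
    have h2 : N - 1 = (N - 2) + 1 := by omega
    rw [h2, Finset.Ico_add_one_right_eq_Icc]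

/-- Zone condition for the first accepted second maximum being at position `q`. -/
def CQ (k q : ℕ) (n : ℕ) (v : ℕ) : Prop :=
  if n < k then True else if n < q then v ≠ 1 else if n = q then v = 1 else 2 ≤ v

lemma stepA (θ : ℝ) {N k : ℕ} (hk : 1 ≤ k) (hN : k + 1 ≤ N) :
    W2 θ N k = ∑ q ∈ Finset.Ico k N,
      ∑ π ∈ Finset.univ.filter
          (fun π : Equiv.Perm (Fin N) => ∀ i : Fin N, CQ k q (i : ℕ) (code π i)),
        θ ^ invCount π := by
  classical
  have hset : Finset.univ.filter (fun π : Equiv.Perm (Fin N) => kWinnable2 k π)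
      = (Finset.Ico k N).biUnion (fun q => Finset.univ.filter
          (fun π : Equiv.Perm (Fin N) => ∀ i : Fin N, CQ k q (i : ℕ) (code π i))) := by
    ext π
    simp only [Finset.mem_biUnion, Finset.mem_filter, Finset.mem_univ, true_and,
      Finset.mem_Ico]
    rw [kWinnable_iff_code k (by omega) π]
    constructor
    · rintro ⟨q, hkq, hpre, h1, hpost⟩
      refine ⟨(q : ℕ), ⟨hkq, q.isLt⟩, fun i => ?_⟩
      rcases Nat.lt_or_ge (i : ℕ) k with c1 | c1
      · rw [CQ, if_pos c1]; trivial
      rcases Nat.lt_or_ge (i : ℕ) (q : ℕ) with c2 | c2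
      · rw [CQ, if_neg (by omega), if_pos c2]
        exact hpre i (by omega) (Fin.lt_def.mpr c2)
      rcases Nat.eq_or_lt_of_le c2 with c3 | c3
      · rw [CQ, if_neg (by omega), if_neg (by omega), if_pos c3.symm]
        rw [show i = q from Fin.ext c3.symm]
        exact h1
      · rw [CQ, if_neg (by omega), if_neg (by omega), if_neg (by omega)]
        exact hpost i (Fin.lt_def.mpr c3)
    · rintro ⟨q, ⟨hkq, hqN⟩, hc⟩
      refine ⟨⟨q, hqN⟩, hkq, ?_, ?_, ?_⟩
      · intro i hki hiq
        have hiq' : (i : ℕ) < q := Fin.lt_def.mp hiq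
        have hthis := hc i
        rw [CQ, if_neg (by omega), if_pos hiq'] at hthis
        exact hthis
      · have hthis : CQ k q q (code π ⟨q, hqN⟩) := hc ⟨q, hqN⟩
        rw [CQ, if_neg (by omega : ¬ q < k), if_neg (lt_irrefl q), if_pos rfl] at hthis
        exact hthis
      · intro l hl
        have hl' : q < (l : ℕ) := Fin.lt_def.mp hl
        have hthis := hc l
        rw [CQ, if_neg (by omega), if_neg (by omega), if_neg (by omega)] at hthis
        exact hthis
  have hdisj : (↑(Finset.Ico k N) : Set ℕ).PairwiseDisjoint
      (fun q => Finset.univ.filter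
        (fun π : Equiv.Perm (Fin N) => ∀ i : Fin N, CQ k q (i : ℕ) (code π i))) := by
    intro q1 h1 q2 h2 hne
    simp only [Finset.coe_Ico, Set.mem_Ico] at h1 h2
    refine Finset.disjoint_left.mpr fun π hp1 hp2 => ?_
    rw [Finset.mem_filter] at hp1 hp2
    rcases lt_or_gt_of_ne hne with h | h
    · have c1 : CQ k q1 q1 (code π ⟨q1, h1.2⟩) := hp1.2 ⟨q1, h1.2⟩
      have c2 : CQ k q2 q1 (code π ⟨q1, h1.2⟩) := hp2.2 ⟨q1, h1.2⟩
      rw [CQ, if_neg (by omega : ¬ q1 < k), if_neg (lt_irrefl q1), if_pos rfl] at c1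
      rw [CQ, if_neg (by omega : ¬ q1 < k), if_pos h] at c2
      exact c2 c1
    · have c1 : CQ k q1 q2 (code π ⟨q2, h2.2⟩) := hp1.2 ⟨q2, h2.2⟩
      have c2 : CQ k q2 q2 (code π ⟨q2, h2.2⟩) := hp2.2 ⟨q2, h2.2⟩
      rw [CQ, if_neg (by omega : ¬ q2 < k), if_neg (lt_irrefl q2), if_pos rfl] at c2
      rw [CQ, if_neg (by omega : ¬ q2 < k), if_pos h] at c1
      exact c1 c2
  rw [W2, hset, Finset.sum_biUnion hdisj]

lemma stepB (θ : ℝ) {N k q : ℕ} (hk : 1 ≤ k) (hkq : k ≤ q) (hqN : q < N) :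
    ∑ π ∈ Finset.univ.filter
        (fun π : Equiv.Perm (Fin N) => ∀ i : Fin N, CQ k q (i : ℕ) (code π i)),
      θ ^ invCount π
    = θ * Pfact θ k * ((∏ j ∈ Finset.Ico (k - 1) (q - 1), (1 + θ ^ 2 * Ppoly θ j)) *
        (∏ j ∈ Finset.Ico q (N - 1), (θ ^ 2 * Ppoly θ j))) := by
  classical
  rw [master θ (fun i : Fin N => CQ k q (i : ℕ))]
  rw [Fin.prod_univ_eq_prod_range
    (fun n => ∑ v ∈ (Finset.range (n + 1)).filter (CQ k q n), θ ^ v) N]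
  rw [← Finset.prod_range_mul_prod_Ico _ (show k ≤ N by omega),
    ← Finset.prod_Ico_consecutive _ hkq (le_of_lt hqN),
    Finset.prod_eq_prod_Ico_succ_bot hqN]
  have E1 : ∏ n ∈ Finset.range k, (∑ v ∈ (Finset.range (n + 1)).filter (CQ k q n), θ ^ v)
      = Pfact θ k := by
    rw [Pfact_eq_prod_range]
    refine Finset.prod_congr rfl fun n hn => ?_
    rw [Finset.mem_range] at hn
    rw [Finset.filter_true_of_mem (fun v _ => by rw [CQ, if_pos hn]; trivial)]
    rfl
  have E2 : ∏ n ∈ Finset.Ico k q, (∑ v ∈ (Finset.range (n + 1)).filter (CQ k q n), θ ^ v)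
      = ∏ j ∈ Finset.Ico (k - 1) (q - 1), (1 + θ ^ 2 * Ppoly θ j) := by
    have h1 : ∀ n ∈ Finset.Ico k q,
        (∑ v ∈ (Finset.range (n + 1)).filter (CQ k q n), θ ^ v)
        = 1 + θ ^ 2 * Ppoly θ (n - 1) := by
      intro n hn
      rw [Finset.mem_Ico] at hn
      have : (Finset.range (n + 1)).filter (CQ k q n)
          = (Finset.range (n + 1)).filter (· ≠ 1) :=
        Finset.filter_congr (fun v _ => by rw [CQ, if_neg (by omega), if_pos hn.2])
      rw [this, sumB θ (by omega : 1 ≤ n)]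
    rcases Nat.eq_or_lt_of_le hkq with rfl | hlt
    · simp
    · rw [Finset.prod_congr rfl h1,
        prod_shift (fun j => 1 + θ ^ 2 * Ppoly θ j) (by omega : 1 ≤ k) (by omega : k ≤ q)]
  have E3 : (∑ v ∈ (Finset.range (q + 1)).filter (CQ k q q), θ ^ v) = θ := by
    have : (Finset.range (q + 1)).filter (CQ k q q)
        = (Finset.range (q + 1)).filter (· = 1) :=
      Finset.filter_congr (fun v _ => by
        rw [CQ, if_neg (by omega), if_neg (lt_irrefl q), if_pos rfl])
    rw [this, sumC θ (by omega : 1 ≤ q)]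
  have E4 : ∏ n ∈ Finset.Ico (q + 1) N,
        (∑ v ∈ (Finset.range (n + 1)).filter (CQ k q n), θ ^ v)
      = ∏ j ∈ Finset.Ico q (N - 1), (θ ^ 2 * Ppoly θ j) := by
    have h1 : ∀ n ∈ Finset.Ico (q + 1) N,
        (∑ v ∈ (Finset.range (n + 1)).filter (CQ k q n), θ ^ v)
        = θ ^ 2 * Ppoly θ (n - 1) := by
      intro n hn
      rw [Finset.mem_Ico] at hn
      have : (Finset.range (n + 1)).filter (CQ k q n)
          = (Finset.range (n + 1)).filter (2 ≤ ·) :=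
        Finset.filter_congr (fun v _ => by
          rw [CQ, if_neg (by omega), if_neg (by omega), if_neg (by omega)])
      rw [this, sumD θ (by omega : 1 ≤ n)]
    rw [Finset.prod_congr rfl h1,
      prod_shift (fun j => θ ^ 2 * Ppoly θ j) (by omega : 1 ≤ q + 1) (by omega : q + 1 ≤ N)]
    have h2 : q + 1 - 1 = q := by omega
    rw [h2]
  rw [E1, E2, E3, E4]
  ring

end S5

/-- Closed form: for `k ≥ 1` and `N ≥ k+1`,
`W₂(N,k) = θ·T₂(N,k) − θ^{2N−2k+1}·(P_{N−2})!·P_k·P_{k−1}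
         = θ·(P_k)!·[∏_{j=k−1}^{N−2}(1+θ²P_j) − θ^{2N−2k}·∏_{j=k−1}^{N−2} P_j]`. -/
theorem W2_closed_form (θ : ℝ) (N k : ℕ) (hk : 1 ≤ k) (hN : k + 1 ≤ N) :
    W2 θ N k =
      θ * T2 θ N k - θ ^ (2 * N - 2 * k + 1) * Pfact θ (N - 2) * Ppoly θ k * Ppoly θ (k - 1) ∧
    W2 θ N k =
      θ * Pfact θ k *
        ((∏ j ∈ Finset.Icc (k - 1) (N - 2), (1 + θ ^ 2 * Ppoly θ j)) -
          θ ^ (2 * N - 2 * k) * ∏ j ∈ Finset.Icc (k - 1) (N - 2), Ppoly θ j) := by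
  classical
  have hBA : ∏ j ∈ Finset.Icc (k - 1) (N - 2), (θ ^ 2 * Ppoly θ j)
      = θ ^ (2 * N - 2 * k) * ∏ j ∈ Finset.Icc (k - 1) (N - 2), Ppoly θ j := by
    rw [Finset.prod_mul_distrib, Finset.prod_const, Nat.card_Icc,
      show N - 2 + 1 - (k - 1) = N - k by omega, ← pow_mul,
      show 2 * (N - k) = 2 * N - 2 * k by omega]
  have hW : W2 θ N k = θ * Pfact θ k *
      ((∏ j ∈ Finset.Icc (k - 1) (N - 2), (1 + θ ^ 2 * Ppoly θ j)) -
        θ ^ (2 * N - 2 * k) * ∏ j ∈ Finset.Icc (k - 1) (N - 2), Ppoly θ j) := by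
    rw [stepA θ hk hN]
    have hB : ∀ q ∈ Finset.Ico k N,
        (∑ π ∈ Finset.univ.filter
            (fun π : Equiv.Perm (Fin N) => ∀ i : Fin N, CQ k q (i : ℕ) (code π i)),
          θ ^ invCount π)
        = θ * Pfact θ k * ((∏ j ∈ Finset.Ico (k - 1) (q - 1), (1 + θ ^ 2 * Ppoly θ j)) *
            (∏ j ∈ Finset.Ico q (N - 1), (θ ^ 2 * Ppoly θ j))) := by
      intro q hq
      rw [Finset.mem_Ico] at hq
      exact stepB θ hk hq.1 hq.2
    rw [Finset.sum_congr rfl hB, ← Finset.mul_sum]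
    congr 1
    rw [← hBA]
    have hsum : ∀ q ∈ Finset.Ico k N,
        ((∏ j ∈ Finset.Ico (k - 1) (q - 1), (1 + θ ^ 2 * Ppoly θ j)) *
          (∏ j ∈ Finset.Ico q (N - 1), (θ ^ 2 * Ppoly θ j)))
        = (fun q => (∏ j ∈ Finset.Ico (k - 1) ((k - 1) + (q - k)), (1 + θ ^ 2 * Ppoly θ j)) *
            (∏ j ∈ Finset.Ico ((k - 1) + (q - k) + 1) ((k - 1) + (N - k)),
              (θ ^ 2 * Ppoly θ j))) q := by
      intro q hq
      rw [Finset.mem_Ico] at hq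
      simp only []
      rw [show (k - 1) + (q - k) + 1 = q by omega,
        show (k - 1) + (q - k) = q - 1 by omega,
        show (k - 1) + (N - k) = N - 1 by omega]
    rw [Finset.sum_congr rfl hsum, Finset.sum_Ico_eq_sum_range]
    have hre : ∀ r ∈ Finset.range (N - k),
        (fun q => (∏ j ∈ Finset.Ico (k - 1) ((k - 1) + (q - k)), (1 + θ ^ 2 * Ppoly θ j)) *
            (∏ j ∈ Finset.Ico ((k - 1) + (q - k) + 1) ((k - 1) + (N - k)),
              (θ ^ 2 * Ppoly θ j))) (k + r)
        = (∏ j ∈ Finset.Ico (k - 1) ((k - 1) + r), (1 + θ ^ 2 * Ppoly θ j)) *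
            (∏ j ∈ Finset.Ico ((k - 1) + r + 1) ((k - 1) + (N - k)),
              (θ ^ 2 * Ppoly θ j)) := by
      intro r hr
      simp only []
      rw [show k + r - k = r by omega]
    rw [Finset.sum_congr rfl hre,
      telescope (fun j => 1 + θ ^ 2 * Ppoly θ j) (fun j => θ ^ 2 * Ppoly θ j)
        (fun j => rfl) (k - 1) (N - k),
      show (k - 1) + (N - k) = N - 1 by omega,
      show N - 1 = (N - 2) + 1 by omega, Finset.Ico_add_one_right_eq_Icc]
  refine ⟨?_, hW⟩
  rw [hW, T2_eval θ hk hN]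
  have hPf : Pfact θ k * ∏ j ∈ Finset.Icc (k - 1) (N - 2), Ppoly θ j
      = Pfact θ (N - 2) * Ppoly θ k * Ppoly θ (k - 1) := by
    have h1 : Finset.Icc (k - 1) (N - 2) = Finset.Ico (k - 1) (N - 1) := by
      rw [show N - 1 = (N - 2) + 1 by omega, Finset.Ico_add_one_right_eq_Icc]
    rw [h1, Finset.prod_eq_prod_Ico_succ_bot (show k - 1 < N - 1 by omega),
      show (k - 1) + 1 = k by omega]
    have e1 : Pfact θ k = (∏ j ∈ Finset.Ico 1 k, Ppoly θ j) * Ppoly θ k := by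
      rw [Pfact, ← Finset.Ico_add_one_right_eq_Icc, Finset.prod_Ico_succ_top hk]
    have e2 : Pfact θ (N - 2)
        = (∏ j ∈ Finset.Ico 1 k, Ppoly θ j) * ∏ j ∈ Finset.Ico k (N - 1), Ppoly θ j := by
      rw [Pfact, ← Finset.Ico_add_one_right_eq_Icc,
        show N - 2 + 1 = N - 1 by omega,
        Finset.prod_Ico_consecutive _ hk (by omega : k ≤ N - 1)]
    rw [e1, e2]
    ring
  rw [pow_succ]
  linear_combination (-(θ ^ (2 * N - 2 * k) * θ)) * hPf
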